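/- For all integers n ≥ 5, the injective 2-split dimension satisfies ⌊n/2⌋ ≤ ID_2(n) ≤ n − 3. -/

import Mathlib

namespace InjectiveSplitSystems

open Finset

variable {α : Type*} [DecidableEq α]

/-- A split of `X`: an unordered bipartition of `X` into two nonempty disjoint parts,
represented as the two-element set `{A, B}` of its parts. -/
def IsSplit (X : Finset α) (S : Finset (Finset α)) : Prop :=
  ∃ A B : Finset α, S = {A, B} ∧ A ∪ B = X ∧ A ∩ B = ∅ ∧ A ≠ ∅ ∧ B ≠ ∅

/-- `S` is an `r`-split of `X`: a split of `X` whose minimum part size is `r`. -/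
def IsRSplit (X : Finset α) (r : ℕ) (S : Finset (Finset α)) : Prop :=
  IsSplit X S ∧ (∃ A ∈ S, A.card = r) ∧ ∀ A ∈ S, r ≤ A.card

/-- A split system on `X`: a set of splits of `X` containing all trivial splits
`{x} | X \ {x}`, `x ∈ X`. -/
def IsSplitSystem (X : Finset α) (𝒮 : Finset (Finset (Finset α))) : Prop :=
  (∀ S ∈ 𝒮, IsSplit X S) ∧ ∀ x ∈ X, ({{x}, X \ {x}} : Finset (Finset α)) ∈ 𝒮

/-- `phiNe Y Y' S` says `φ_Y(S) ≠ φ_{Y'}(S)`: the part of `S` containing at least two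
elements of the 3-set `Y` differs from the part of `S` containing at least two
elements of the 3-set `Y'`. -/
def phiNe (Y Y' : Finset α) (S : Finset (Finset α)) : Prop :=
  ∃ t ∈ S, ∃ t' ∈ S, t ≠ t' ∧ 2 ≤ (Y ∩ t).card ∧ 2 ≤ (Y' ∩ t').card

/-- A split system on `X` is injective if for all distinct 3-subsets `Y`, `Y'` of `X`
there is a split `S ∈ 𝒮` with `φ_Y(S) ≠ φ_{Y'}(S)`. -/
def IsInjective (X : Finset α) (𝒮 : Finset (Finset (Finset α))) : Prop :=
  ∀ Y Y' : Finset α, Y ⊆ X → Y' ⊆ X → Y.card = 3 → Y'.card = 3 → Y ≠ Y' →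
    ∃ S ∈ 𝒮, phiNe Y Y' S

/-- The restriction `S|_Y` of a split to `Y`, as the set of restricted parts. -/
def restrictSplit (S : Finset (Finset α)) (Y : Finset α) : Finset (Finset α) :=
  S.image (· ∩ Y)

open scoped Classical in
/-- The restriction `𝒮|_Y` of a split system to `Y`: all splits
`(A ∩ Y) | (B ∩ Y)` with `A|B ∈ 𝒮` and both intersections nonempty. -/
noncomputable def restrictSS (𝒮 : Finset (Finset (Finset α))) (Y : Finset α) :
    Finset (Finset (Finset α)) :=
  (𝒮.image fun S => restrictSplit S Y).filter fun T => ∀ t ∈ T, t ≠ ∅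

/-- `𝒮` 4-dices `X`. -/
def FourDices (X : Finset α) (𝒮 : Finset (Finset (Finset α))) : Prop :=
  X.card < 4 ∨ ∀ Y ⊆ X, Y.card = 4 →
    ∃ 𝒯 ⊆ restrictSS 𝒮 Y, 2 ≤ 𝒯.card ∧ ∀ S ∈ 𝒯, IsRSplit Y 2 S

/-- `𝒮` 5-dices `X`. -/
def FiveDices (X : Finset α) (𝒮 : Finset (Finset (Finset α))) : Prop :=
  X.card < 5 ∨ ∀ Y ⊆ X, Y.card = 5 →
    ∃ 𝒯 ⊆ restrictSS 𝒮 Y, 5 ≤ 𝒯.card ∧ ∀ S ∈ 𝒯, IsRSplit Y 2 S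

/-- `𝒮` 6-dices `X`: every 6-subset restriction contains a 3-split or a triangle
of 2-splits. -/
def SixDices (X : Finset α) (𝒮 : Finset (Finset (Finset α))) : Prop :=
  X.card < 6 ∨ ∀ Y ⊆ X, Y.card = 6 →
    (∃ S ∈ restrictSS 𝒮 Y, IsRSplit Y 3 S) ∨
    (∃ x ∈ Y, ∃ y ∈ Y, ∃ z ∈ Y, x ≠ y ∧ x ≠ z ∧ y ≠ z ∧
      ({{x, y}, Y \ {x, y}} : Finset (Finset α)) ∈ restrictSS 𝒮 Y ∧
      ({{x, z}, Y \ {x, z}} : Finset (Finset α)) ∈ restrictSS 𝒮 Y ∧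
      ({{y, z}, Y \ {y, z}} : Finset (Finset α)) ∈ restrictSS 𝒮 Y)

/-- Two splits are incompatible if they are distinct and all four pairwise
intersections of their parts are nonempty. -/
def Incompatible (S T : Finset (Finset α)) : Prop :=
  S ≠ T ∧ ∀ A ∈ S, ∀ B ∈ T, A ∩ B ≠ ∅

open scoped Classical in
/-- The dimension of a split system: maximum size of a pairwise incompatible subset
(which is `1` when all splits are pairwise compatible and `𝒮` is nonempty). -/
noncomputable def dimSS (𝒮 : Finset (Finset (Finset α))) : ℕ :=
  (𝒮.powerset.filter fun 𝒯 => ∀ S ∈ 𝒯, ∀ T ∈ 𝒯, S ≠ T → Incompatible S T).sup Finset.card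

/-- The injective dimension `ID(n)`: minimum dimension of an injective split system
on `{1, …, n}`. -/
noncomputable def ID (n : ℕ) : ℕ :=
  sInf {d : ℕ | ∃ 𝒮 : Finset (Finset (Finset ℕ)),
    IsSplitSystem (Finset.Icc 1 n) 𝒮 ∧ IsInjective (Finset.Icc 1 n) 𝒮 ∧ dimSS 𝒮 = d}

/-- The injective 2-split dimension `ID₂(n)`: minimum dimension of an injective split
system on `{1, …, n}` all of whose non-trivial splits have size 2. -/
noncomputable def ID2 (n : ℕ) : ℕ :=
  sInf {d : ℕ | ∃ 𝒮 : Finset (Finset (Finset ℕ)),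
    IsSplitSystem (Finset.Icc 1 n) 𝒮 ∧ IsInjective (Finset.Icc 1 n) 𝒮 ∧
    (∀ S ∈ 𝒮, IsRSplit (Finset.Icc 1 n) 1 S ∨ IsRSplit (Finset.Icc 1 n) 2 S) ∧
    dimSS 𝒮 = d}

/-- `𝒮` is rooted-injective relative to `r`. -/
def IsRootedInjective (X : Finset α) (r : α) (𝒮 : Finset (Finset (Finset α))) : Prop :=
  ∀ Z Z' : Finset α, Z ⊆ X \ {r} → Z' ⊆ X \ {r} → Z.card = 2 → Z'.card = 2 → Z ≠ Z' →
    ∃ S ∈ 𝒮, phiNe (insert r Z) (insert r Z') S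

/-- The rooted-injective dimension `ID^r(n)`: minimum dimension of a split system on an
`n`-element set that is rooted-injective relative to a given element. -/
noncomputable def IDr (n : ℕ) : ℕ :=
  sInf {d : ℕ | ∃ 𝒮 : Finset (Finset (Finset ℕ)),
    IsSplitSystem (Finset.Icc 1 n) 𝒮 ∧ IsRootedInjective (Finset.Icc 1 n) 1 𝒮 ∧
    dimSS 𝒮 = d}

/-- `𝒮` is circular: there is a labelling `x_1, …, x_n` of `X` such that every split
of `𝒮` has the form `{x_i, …, x_j} | complement`. -/
def IsCircular (X : Finset α) (𝒮 : Finset (Finset (Finset α))) : Prop :=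
  ∃ f : ℕ → α, Set.InjOn f ↑(Finset.Icc 1 X.card) ∧
    (Finset.Icc 1 X.card).image f = X ∧
    ∀ S ∈ 𝒮, ∃ i j : ℕ, 1 ≤ i ∧ i ≤ j ∧ j ≤ X.card ∧
      S = {(Finset.Icc i j).image f, X \ (Finset.Icc i j).image f}

/-- `𝒮` is maximal circular: circular and not properly contained in any circular
split system on `X`. -/
def IsMaximalCircular (X : Finset α) (𝒮 : Finset (Finset (Finset α))) : Prop :=
  IsCircular X 𝒮 ∧ ∀ 𝒮' : Finset (Finset (Finset α)),
    IsSplitSystem X 𝒮' → IsCircular X 𝒮' → 𝒮 ⊆ 𝒮' → 𝒮' = 𝒮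

/-- The degree of `x` in the graph `P(𝒮)` on vertex set `X` whose edges are the
pairs `{x, y}` with `xy | X − {x,y} ∈ 𝒮`. -/
def degP (X : Finset α) (𝒮 : Finset (Finset (Finset α))) (x : α) : ℕ :=
  ((X \ {x}).filter fun y => ({{x, y}, X \ {x, y}} : Finset (Finset α)) ∈ 𝒮).card

/-- `P(𝒮)` contains a 3-clique. -/
def HasTriangle (X : Finset α) (𝒮 : Finset (Finset (Finset α))) : Prop :=
  ∃ x ∈ X, ∃ y ∈ X, ∃ z ∈ X, x ≠ y ∧ x ≠ z ∧ y ≠ z ∧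
    ({{x, y}, X \ {x, y}} : Finset (Finset α)) ∈ 𝒮 ∧
    ({{x, z}, X \ {x, z}} : Finset (Finset α)) ∈ 𝒮 ∧
    ({{y, z}, X \ {y, z}} : Finset (Finset α)) ∈ 𝒮

/-- Conditions (B1) and (B2) for a map to be a vertex of the Buneman graph. -/
def IsBunemanVertex (𝒮 : Finset (Finset (Finset α))) (φ : {S // S ∈ 𝒮} → Finset α) : Prop :=
  (∀ S, φ S ∈ S.1) ∧ ∀ S S', S ≠ S' → (φ S ∩ φ S').Nonempty

/-- The vertex set of the Buneman graph `B(𝒮)`. -/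
abbrev BunemanVertex (𝒮 : Finset (Finset (Finset α))) : Type _ :=
  {φ : {S // S ∈ 𝒮} → Finset α // IsBunemanVertex 𝒮 φ}

/-- The Buneman graph `B(𝒮)`: two vertices are adjacent iff they differ on exactly
one split. -/
def BunemanGraph (𝒮 : Finset (Finset (Finset α))) : SimpleGraph (BunemanVertex 𝒮) where
  Adj φ ψ := ∃! S, φ.1 S ≠ ψ.1 S
  symm := by
    constructor
    rintro φ ψ ⟨S, hS, hU⟩
    exact ⟨S, hS.symm, fun T hT => hU T hT.symm⟩
  loopless := by
    constructor
    rintro φ ⟨S, hS, -⟩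
    exact hS rfl

/-- `m` is a median of `u`, `v`, `w` in the graph `G`. -/
def IsMedian {V : Type*} (G : SimpleGraph V) (u v w m : V) : Prop :=
  G.dist u m + G.dist m v = G.dist u v ∧
  G.dist v m + G.dist m w = G.dist v w ∧
  G.dist u m + G.dist m w = G.dist u w


section Aux
open scoped Classical

/-- cycle adjacency on `{1,…,n}` (arithmetic form). -/
def cycAdj (n a b : ℕ) : Prop :=
  b = a + 1 ∨ a = b + 1 ∨ (a = 1 ∧ b = n) ∨ (b = 1 ∧ a = n)

lemma cycAdj_symm {n a b : ℕ} (h : cycAdj n a b) : cycAdj n b a := by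
  unfold cycAdj at *; tauto

/-- the split `{a,b} | X \ {a,b}` -/
def ps (X : Finset ℕ) (a b : ℕ) : Finset (Finset ℕ) :=
  {{a, b}, X \ {a, b}}

/-- the candidate split system: all trivial splits plus all 2-splits `{a,b}` with
`a b` non-adjacent on the `n`-cycle. -/
noncomputable def SS (n : ℕ) : Finset (Finset (Finset ℕ)) :=
  ((Finset.Icc 1 n ×ˢ Finset.Icc 1 n).filter
      fun q => q.1 = q.2 ∨ ¬ cycAdj n q.1 q.2).image fun q => ps (Finset.Icc 1 n) q.1 q.2

lemma mem_SS {n : ℕ} {S : Finset (Finset ℕ)} :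
    S ∈ SS n ↔ ∃ a b : ℕ, a ∈ Finset.Icc 1 n ∧ b ∈ Finset.Icc 1 n ∧
      (a = b ∨ ¬ cycAdj n a b) ∧ S = ps (Finset.Icc 1 n) a b := by
  unfold SS
  simp only [Finset.mem_image, Finset.mem_filter, Finset.mem_product]
  constructor
  · rintro ⟨⟨a, b⟩, ⟨⟨ha, hb⟩, hcond⟩, rfl⟩
    exact ⟨a, b, ha, hb, hcond, rfl⟩
  · rintro ⟨a, b, ha, hb, hcond, rfl⟩
    exact ⟨⟨a, b⟩, ⟨⟨ha, hb⟩, hcond⟩, rfl⟩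

lemma card_inter_sdiff {Y X A : Finset ℕ} (hY : Y ⊆ X) :
    (Y ∩ A).card + (Y ∩ (X \ A)).card = Y.card := by
  have h1 : Y ∩ (X \ A) = Y \ A := by
    ext x
    simp only [Finset.mem_inter, Finset.mem_sdiff]
    exact ⟨fun ⟨h1, _, h3⟩ => ⟨h1, h3⟩, fun ⟨h1, h2⟩ => ⟨h1, hY h1, h2⟩⟩
  rw [h1, Finset.card_inter_add_card_sdiff]

lemma sdiff_nonempty_of_card {X T : Finset ℕ} {n : ℕ} (hX : X.card = n)
    (hT : T.card < n) : (X \ T).Nonempty := by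
  rw [← Finset.card_pos]
  have := Finset.card_le_card_sdiff_add_card (s := X) (t := T)
  omega

end Aux
section Aux2
open Finset

lemma ps_isSplit {n a b : ℕ} (hn : 5 ≤ n) (ha : a ∈ Finset.Icc 1 n)
    (hb : b ∈ Finset.Icc 1 n) : IsSplit (Finset.Icc 1 n) (ps (Finset.Icc 1 n) a b) := by
  refine ⟨{a, b}, Finset.Icc 1 n \ {a, b}, rfl, ?_, ?_, ?_, ?_⟩
  · apply Finset.union_sdiff_of_subset
    intro x hx
    simp only [Finset.mem_insert, Finset.mem_singleton] at hx
    rcases hx with rfl | rfl <;> assumption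
  · exact Finset.inter_sdiff_self _ _
  · exact Finset.insert_ne_empty _ _
  · have h1 : ({a, b} : Finset ℕ).card < n := by
      have := Finset.card_insert_le a ({b} : Finset ℕ)
      simp only [Finset.card_singleton] at this
      omega
    have := sdiff_nonempty_of_card (X := Finset.Icc 1 n) (n := n) (by rw [Nat.card_Icc]; omega) h1
    exact Finset.nonempty_iff_ne_empty.mp this

lemma card_sdiff_pair {n a b : ℕ} (ha : a ∈ Finset.Icc 1 n) (hb : b ∈ Finset.Icc 1 n) :
    (Finset.Icc 1 n \ {a, b}).card = n - ({a, b} : Finset ℕ).card := by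
  rw [Finset.card_sdiff_of_subset]
  · rw [Nat.card_Icc]; omega
  · intro x hx
    simp only [Finset.mem_insert, Finset.mem_singleton] at hx
    rcases hx with rfl | rfl <;> assumption

lemma SS_isSplitSystem {n : ℕ} (hn : 5 ≤ n) :
    IsSplitSystem (Finset.Icc 1 n) (SS n) := by
  constructor
  · intro S hS
    rw [mem_SS] at hS
    obtain ⟨a, b, ha, hb, _, rfl⟩ := hS
    exact ps_isSplit hn ha hb
  · intro x hx
    rw [mem_SS]
    refine ⟨x, x, hx, hx, Or.inl rfl, ?_⟩
    unfold ps
    rw [Finset.pair_eq_singleton]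

lemma SS_rsplit {n : ℕ} (hn : 5 ≤ n) :
    ∀ S ∈ SS n, IsRSplit (Finset.Icc 1 n) 1 S ∨ IsRSplit (Finset.Icc 1 n) 2 S := by
  intro S hS
  rw [mem_SS] at hS
  obtain ⟨a, b, ha, hb, _, rfl⟩ := hS
  have hsplit := ps_isSplit hn ha hb
  have hmem : ∀ A ∈ ps (Finset.Icc 1 n) a b, A = {a, b} ∨ A = Finset.Icc 1 n \ {a, b} := by
    intro A hA
    simpa [ps, Finset.mem_insert, Finset.mem_singleton] using hA
  have hcompl := card_sdiff_pair ha hb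
  by_cases hab : a = b
  · left
    subst hab
    have hcard : ({a, a} : Finset ℕ).card = 1 := by rw [Finset.pair_eq_singleton]; simp
    refine ⟨hsplit, ⟨{a, a}, by simp [ps], hcard⟩, ?_⟩
    intro A hA
    rcases hmem A hA with rfl | rfl
    · omega
    · omega
  · right
    have hcard : ({a, b} : Finset ℕ).card = 2 := Finset.card_pair hab
    refine ⟨hsplit, ⟨{a, b}, by simp [ps], hcard⟩, ?_⟩
    intro A hA
    rcases hmem A hA with rfl | rfl
    · omega
    · omega

lemma phiNe_ps {X Y Y' : Finset ℕ} {a b : ℕ} (hY : Y ⊆ X) (hY' : Y' ⊆ X)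
    (hY'c : Y'.card = 3) (hab : a ≠ b) (ha : a ∈ Y) (hb : b ∈ Y)
    (h' : a ∉ Y' ∨ b ∉ Y') : phiNe Y Y' (ps X a b) := by
  refine ⟨{a, b}, by simp [ps], X \ {a, b}, by simp [ps], ?_, ?_, ?_⟩
  · intro h
    have haX : a ∈ X := hY ha
    have : a ∈ X \ {a, b} := h ▸ (by simp : a ∈ ({a, b} : Finset ℕ))
    simp at this
  · have hsub : ({a, b} : Finset ℕ) ⊆ Y ∩ {a, b} := by
      intro x hx
      simp only [Finset.mem_insert, Finset.mem_singleton] at hx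
      rcases hx with rfl | rfl <;> simp [ha, hb]
    calc 2 = ({a, b} : Finset ℕ).card := (Finset.card_pair hab).symm
    _ ≤ _ := Finset.card_le_card hsub
  · have hsmall : (Y' ∩ {a, b}).card ≤ 1 := by
      rcases h' with h' | h'
      · have : Y' ∩ {a, b} ⊆ {b} := by
          intro x hx
          simp only [Finset.mem_inter, Finset.mem_insert, Finset.mem_singleton] at hx ⊢
          rcases hx with ⟨hx1, rfl | rfl⟩
          · exact absurd hx1 h'
          · rfl
        simpa using Finset.card_le_card this
      · have : Y' ∩ {a, b} ⊆ {a} := by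
          intro x hx
          simp only [Finset.mem_inter, Finset.mem_insert, Finset.mem_singleton] at hx ⊢
          rcases hx with ⟨hx1, rfl | rfl⟩
          · rfl
          · exact absurd hx1 h'
        simpa using Finset.card_le_card this
    have := card_inter_sdiff (A := {a, b}) hY'
    omega

end Aux2
section Aux3
open Finset

lemma factA {n a b c : ℕ} (hn : 5 ≤ n) (ha : a ∈ Finset.Icc 1 n) (hb : b ∈ Finset.Icc 1 n)
    (hc : c ∈ Finset.Icc 1 n) (h1 : cycAdj n a b) (h2 : cycAdj n a c)
    (h3 : cycAdj n b c) : False := by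
  simp only [Finset.mem_Icc] at ha hb hc
  unfold cycAdj at h1 h2 h3
  omega

lemma factB {n a b c d : ℕ} (hn : 5 ≤ n) (ha : a ∈ Finset.Icc 1 n) (hb : b ∈ Finset.Icc 1 n)
    (hc : c ∈ Finset.Icc 1 n) (hd : d ∈ Finset.Icc 1 n) (hab : a ≠ b) (hcd : c ≠ d)
    (h1 : cycAdj n c a) (h2 : cycAdj n c b) (h3 : cycAdj n d a) (h4 : cycAdj n d b) :
    False := by
  simp only [Finset.mem_Icc] at ha hb hc hd
  unfold cycAdj at h1 h2 h3 h4
  omega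

lemma factC {a b c : ℕ} (ha : a ∈ Finset.Icc 1 5) (hb : b ∈ Finset.Icc 1 5)
    (hc : c ∈ Finset.Icc 1 5) (hab : a ≠ b) (hac : a ≠ c) (hbc : b ≠ c)
    (h1 : ¬ cycAdj 5 a b) (h2 : ¬ cycAdj 5 a c) (h3 : ¬ cycAdj 5 b c) : False := by
  simp only [Finset.mem_Icc] at ha hb hc
  unfold cycAdj at h1 h2 h3
  omega

lemma phiNe_swap {Y Y' : Finset ℕ} {S : Finset (Finset ℕ)} (h : phiNe Y Y' S) :
    phiNe Y' Y S := by
  obtain ⟨t, ht, t', ht', hne, h2, h2'⟩ := h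
  exact ⟨t', ht', t, ht, hne.symm, h2', h2⟩

lemma SS_injective {n : ℕ} (hn : 5 ≤ n) : IsInjective (Finset.Icc 1 n) (SS n) := by
  intro Y Y' hY hY' hYc hY'c hne
  suffices h : ∃ a b, a ≠ b ∧ ¬ cycAdj n a b ∧
      ((a ∈ Y ∧ b ∈ Y ∧ (a ∉ Y' ∨ b ∉ Y')) ∨ (a ∈ Y' ∧ b ∈ Y' ∧ (a ∉ Y ∨ b ∉ Y))) by
    obtain ⟨a, b, hab, hcyc, hcase⟩ := h
    rcases hcase with ⟨h1, h2, h3⟩ | ⟨h1, h2, h3⟩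
    · refine ⟨ps (Finset.Icc 1 n) a b, ?_, phiNe_ps hY hY' hY'c hab h1 h2 h3⟩
      rw [mem_SS]; exact ⟨a, b, hY h1, hY h2, Or.inr hcyc, rfl⟩
    · refine ⟨ps (Finset.Icc 1 n) a b, ?_, phiNe_swap (phiNe_ps hY' hY hYc hab h1 h2 h3)⟩
      rw [mem_SS]; exact ⟨a, b, hY' h1, hY' h2, Or.inr hcyc, rfl⟩
  have hYY' : ¬ Y ⊆ Y' := fun h => hne (Finset.eq_of_subset_of_card_le h (by omega))
  have hY'Y : ¬ Y' ⊆ Y := fun h => hne (Finset.eq_of_subset_of_card_le h (by omega)).symm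
  obtain ⟨c, hcY, hcY'⟩ := Finset.not_subset.mp hYY'
  obtain ⟨d, hdY', hdY⟩ := Finset.not_subset.mp hY'Y
  by_cases hc : ∃ e ∈ Y, e ≠ c ∧ ¬ cycAdj n c e
  · obtain ⟨e, heY, hec, hcyc⟩ := hc
    exact ⟨c, e, Ne.symm hec, hcyc, Or.inl ⟨hcY, heY, Or.inl hcY'⟩⟩
  by_cases hd : ∃ e ∈ Y', e ≠ d ∧ ¬ cycAdj n d e
  · obtain ⟨e, heY', hed, hcyc⟩ := hd
    exact ⟨d, e, Ne.symm hed, hcyc, Or.inr ⟨hdY', heY', Or.inl hdY⟩⟩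
  push_neg at hc hd
  have herase : (Y.erase c).card = 2 := by rw [Finset.card_erase_of_mem hcY, hYc]
  obtain ⟨u, v, huv, huvE⟩ := Finset.card_eq_two.mp herase
  have huY : u ∈ Y := Finset.mem_of_mem_erase (huvE ▸ Finset.mem_insert_self u {v})
  have hvY : v ∈ Y := Finset.mem_of_mem_erase (huvE ▸ Finset.mem_insert_of_mem (Finset.mem_singleton_self v))
  have huc : u ≠ c := Finset.ne_of_mem_erase (huvE ▸ Finset.mem_insert_self u {v})
  have hvc : v ≠ c := Finset.ne_of_mem_erase (huvE ▸ Finset.mem_insert_of_mem (Finset.mem_singleton_self v))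
  have hcu : cycAdj n c u := hc u huY huc
  have hcv : cycAdj n c v := hc v hvY hvc
  by_cases huvadj : cycAdj n u v
  · exact absurd huvadj (fun h => factA hn (hY hcY) (hY huY) (hY hvY) hcu hcv h)
  by_cases hu' : u ∈ Y' ∧ v ∈ Y'
  · obtain ⟨huY', hvY'⟩ := hu'
    have hud : u ≠ d := fun h => hdY (h ▸ huY)
    have hvd : v ≠ d := fun h => hdY (h ▸ hvY)
    have hdu : cycAdj n d u := hd u huY' hud
    have hdv : cycAdj n d v := hd v hvY' hvd
    have hcd : c ≠ d := fun h => hcY' (h ▸ hdY')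
    exact absurd (factB hn (hY huY) (hY hvY) (hY hcY) (hY' hdY') huv hcd hcu hcv hdu hdv) not_false
  · refine ⟨u, v, huv, huvadj, Or.inl ⟨huY, hvY, ?_⟩⟩
    tauto

end Aux3
section Aux4
open Finset

lemma pair_struct {e : Finset ℕ} {b : ℕ} (h : e.card = 2) (hb : b ∈ e) :
    ∃ c, c ≠ b ∧ e = {b, c} := by
  have h1 : (e.erase b).card = 1 := by rw [Finset.card_erase_of_mem hb, h]
  obtain ⟨c, hc⟩ := Finset.card_eq_one.mp h1
  refine ⟨c, ?_, ?_⟩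
  · exact Finset.ne_of_mem_erase (hc ▸ Finset.mem_singleton_self c)
  · rw [← Finset.insert_erase hb, hc]

lemma star_or_tri (E : Finset (Finset ℕ)) (h2 : ∀ e ∈ E, e.card = 2)
    (hint : ∀ e ∈ E, ∀ f ∈ E, e ≠ f → (e ∩ f).Nonempty) :
    (∃ v, ∀ e ∈ E, v ∈ e) ∨
    ∃ x y z : ℕ, x ≠ y ∧ x ≠ z ∧ y ≠ z ∧ ∀ e ∈ E, e ⊆ {x, y, z} := by
  by_cases hv : ∃ v, ∀ e ∈ E, v ∈ e
  · exact Or.inl hv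
  push_neg at hv
  right
  obtain ⟨e1, he1, -⟩ := hv 0
  obtain ⟨a, b, hab, he1E⟩ := Finset.card_eq_two.mp (h2 e1 he1)
  subst he1E
  obtain ⟨e2, he2, ha2⟩ := hv a
  have hbe2 : b ∈ e2 := by
    have hne : ({a, b} : Finset ℕ) ≠ e2 := fun h => ha2 (h ▸ Finset.mem_insert_self a {b})
    obtain ⟨w, hw⟩ := hint _ he1 _ he2 hne
    rw [Finset.mem_inter] at hw
    rcases Finset.mem_insert.mp hw.1 with rfl | hwb
    · exact absurd hw.2 ha2
    · exact Finset.mem_singleton.mp hwb ▸ hw.2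
  obtain ⟨c, hcb, he2E⟩ := pair_struct (h2 e2 he2) hbe2
  have hca : c ≠ a := by
    rintro rfl
    exact ha2 (he2E ▸ Finset.mem_insert_of_mem (Finset.mem_singleton_self c))
  obtain ⟨e3, he3, hb3⟩ := hv b
  have hae3 : a ∈ e3 := by
    have hne : ({a, b} : Finset ℕ) ≠ e3 := fun h =>
      hb3 (h ▸ Finset.mem_insert_of_mem (Finset.mem_singleton_self b))
    obtain ⟨w, hw⟩ := hint _ he1 _ he3 hne
    rw [Finset.mem_inter] at hw
    rcases Finset.mem_insert.mp hw.1 with rfl | hwb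
    · exact hw.2
    · exact absurd (Finset.mem_singleton.mp hwb ▸ hw.2) hb3
  have hce3 : c ∈ e3 := by
    have hne : e2 ≠ e3 := fun h => hb3 (h ▸ hbe2)
    obtain ⟨w, hw⟩ := hint _ he2 _ he3 hne
    rw [Finset.mem_inter, he2E] at hw
    rcases Finset.mem_insert.mp hw.1 with rfl | hwb
    · exact absurd hw.2 hb3
    · exact Finset.mem_singleton.mp hwb ▸ hw.2
  have he3E : e3 = {a, c} := by
    refine (Finset.eq_of_subset_of_card_le ?_ ?_).symm
    · intro t ht
      rcases Finset.mem_insert.mp ht with rfl | ht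
      · exact hae3
      · exact Finset.mem_singleton.mp ht ▸ hce3
    · rw [h2 e3 he3, Finset.card_pair (Ne.symm hca)]
  refine ⟨a, b, c, hab, Ne.symm hca, Ne.symm hcb, ?_⟩
  intro e he
  by_contra hnot
  obtain ⟨w, hwe, hw3⟩ := Finset.not_subset.mp hnot
  simp only [Finset.mem_insert, Finset.mem_singleton, not_or] at hw3
  obtain ⟨hwa, hwb, hwc⟩ := hw3
  obtain ⟨y, hyw, heE⟩ := pair_struct (h2 e he) hwe
  have hmemy : ∀ f : Finset ℕ, f ∈ E → f ⊆ {a, b, c} → e ≠ f → y ∈ f := by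
    intro f hf hfsub hef
    obtain ⟨z, hz⟩ := hint _ he _ hf hef
    rw [Finset.mem_inter, heE] at hz
    rcases Finset.mem_insert.mp hz.1 with rfl | hzy
    · have := hfsub hz.2
      simp only [Finset.mem_insert, Finset.mem_singleton] at this
      tauto
    · exact Finset.mem_singleton.mp hzy ▸ hz.2
  have hsub1 : ({a, b} : Finset ℕ) ⊆ {a, b, c} := by
    intro t ht
    simp only [Finset.mem_insert, Finset.mem_singleton] at ht ⊢
    tauto
  have hsub2 : e2 ⊆ {a, b, c} := by
    rw [he2E]
    intro t ht
    simp only [Finset.mem_insert, Finset.mem_singleton] at ht ⊢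
    tauto
  have hsub3 : e3 ⊆ {a, b, c} := by
    rw [he3E]
    intro t ht
    simp only [Finset.mem_insert, Finset.mem_singleton] at ht ⊢
    tauto
  have hne1 : e ≠ {a, b} := fun h => hwa (by
    have := h ▸ hwe
    rcases Finset.mem_insert.mp this with rfl | h'
    · rfl
    · exact absurd (Finset.mem_singleton.mp h') hwb)
  have hne2 : e ≠ e2 := fun h => by
    have := h ▸ hwe
    rw [he2E] at this
    rcases Finset.mem_insert.mp this with rfl | h'
    · exact hwb rfl
    · exact hwc (Finset.mem_singleton.mp h')
  have hne3 : e ≠ e3 := fun h => by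
    have := h ▸ hwe
    rw [he3E] at this
    rcases Finset.mem_insert.mp this with rfl | h'
    · exact hwa rfl
    · exact hwc (Finset.mem_singleton.mp h')
  have hy1 := hmemy _ he1 hsub1 hne1
  have hy2 := hmemy _ he2 hsub2 hne2
  have hy3 := hmemy _ he3 hsub3 hne3
  rw [he2E] at hy2
  rw [he3E] at hy3
  simp only [Finset.mem_insert, Finset.mem_singleton] at hy1 hy2 hy3
  rcases hy1 with rfl | rfl
  · tauto
  · tauto

end Aux4
section Aux5
open Finset
open scoped Classical

noncomputable def pp (S : Finset (Finset ℕ)) : Finset ℕ :=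
  (S.filter fun A => A.card = 2).biUnion id

lemma pp_eq {n a b : ℕ} (hn : 5 ≤ n) (ha : a ∈ Finset.Icc 1 n) (hb : b ∈ Finset.Icc 1 n)
    (hab : a ≠ b) : pp (ps (Finset.Icc 1 n) a b) = {a, b} := by
  unfold pp ps
  have h1 : ({a, b} : Finset ℕ).card = 2 := Finset.card_pair hab
  have h2 : ¬ (Finset.Icc 1 n \ {a, b}).card = 2 := by
    rw [card_sdiff_pair ha hb, h1]; omega
  rw [Finset.filter_insert, if_pos h1, Finset.filter_singleton, if_neg h2]
  simp

lemma SS_dim_le {n : ℕ} (hn : 5 ≤ n) : dimSS (SS n) ≤ n - 3 := by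
  unfold dimSS
  apply Finset.sup_le
  intro 𝒯 h𝒯
  rw [Finset.mem_filter, Finset.mem_powerset] at h𝒯
  obtain ⟨hsub, hinc⟩ := h𝒯
  rcases le_or_gt 𝒯.card 1 with hone | hone
  · omega
  have hform : ∀ S ∈ 𝒯, ∃ a b, a ∈ Finset.Icc 1 n ∧ b ∈ Finset.Icc 1 n ∧ a ≠ b ∧
      ¬ cycAdj n a b ∧ S = ps (Finset.Icc 1 n) a b := by
    intro S hS
    obtain ⟨a, b, ha, hb, hcond, rfl⟩ := mem_SS.mp (hsub hS)
    by_cases hab : a = b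
    · exfalso
      subst hab
      obtain ⟨T, hT, hTS⟩ := Finset.exists_mem_ne hone (ps (Finset.Icc 1 n) a a)
      obtain ⟨hne, hI⟩ := hinc (ps (Finset.Icc 1 n) a a) hS T hT (Ne.symm hTS)
      obtain ⟨C, D, hTE, hU, hInt, hC, hD⟩ := (SS_isSplitSystem hn).1 T (hsub hT)
      have hCmem : C ∈ T := hTE ▸ Finset.mem_insert_self C {D}
      have hDmem : D ∈ T := hTE ▸ Finset.mem_insert_of_mem (Finset.mem_singleton_self D)
      have hsing : ({a, a} : Finset ℕ) ∈ ps (Finset.Icc 1 n) a a :=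
        Finset.mem_insert_self _ _
      have h1 := hI _ hsing _ hCmem
      have h2 := hI _ hsing _ hDmem
      rw [← Finset.nonempty_iff_ne_empty] at h1 h2
      obtain ⟨x, hx⟩ := h1
      obtain ⟨y, hy⟩ := h2
      rw [Finset.mem_inter] at hx hy
      have hxa : x = a := by
        have := hx.1
        rw [Finset.pair_eq_singleton, Finset.mem_singleton] at this
        exact this
      have hya : y = a := by
        have := hy.1
        rw [Finset.pair_eq_singleton, Finset.mem_singleton] at this
        exact this
      have : a ∈ C ∩ D := Finset.mem_inter.mpr ⟨hxa ▸ hx.2, hya ▸ hy.2⟩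
      rw [hInt] at this
      exact absurd this (Finset.notMem_empty a)
    · rcases hcond with h | h
      · exact absurd h hab
      · exact ⟨a, b, ha, hb, hab, h, rfl⟩
  have hkey : ∀ S ∈ 𝒯, S = ({pp S, Finset.Icc 1 n \ pp S} : Finset (Finset ℕ)) ∧
      (pp S).card = 2 ∧ pp S ⊆ Finset.Icc 1 n ∧
      (∀ x ∈ pp S, ∀ y ∈ pp S, x ≠ y → ¬ cycAdj n x y) := by
    intro S hS
    obtain ⟨a, b, ha, hb, hab, hcyc, rfl⟩ := hform S hS
    rw [pp_eq hn ha hb hab]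
    refine ⟨rfl, Finset.card_pair hab, ?_, ?_⟩
    · intro x hx
      rcases Finset.mem_insert.mp hx with rfl | hx
      · exact ha
      · exact Finset.mem_singleton.mp hx ▸ hb
    · intro x hx y hy hxy
      simp only [Finset.mem_insert, Finset.mem_singleton] at hx hy
      rcases hx with rfl | rfl <;> rcases hy with rfl | rfl
      · exact absurd rfl hxy
      · exact hcyc
      · exact fun h => hcyc (cycAdj_symm h)
      · exact absurd rfl hxy
  have hinj2 : Set.InjOn pp ↑𝒯 := by
    intro S hS T hT hpp
    rw [(hkey S hS).1, (hkey T hT).1, hpp]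
  set E := 𝒯.image pp with hE
  have hcardE : E.card = 𝒯.card := Finset.card_image_of_injOn hinj2
  have hE2 : ∀ e ∈ E, e.card = 2 := by
    intro e he
    obtain ⟨S, hS, rfl⟩ := Finset.mem_image.mp he
    exact (hkey S hS).2.1
  have hEX : ∀ e ∈ E, e ⊆ Finset.Icc 1 n := by
    intro e he
    obtain ⟨S, hS, rfl⟩ := Finset.mem_image.mp he
    exact (hkey S hS).2.2.1
  have hEcyc : ∀ e ∈ E, ∀ x ∈ e, ∀ y ∈ e, x ≠ y → ¬ cycAdj n x y := by
    intro e he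
    obtain ⟨S, hS, rfl⟩ := Finset.mem_image.mp he
    exact (hkey S hS).2.2.2
  have hEint : ∀ e ∈ E, ∀ f ∈ E, e ≠ f → (e ∩ f).Nonempty := by
    intro e he f hf hef
    obtain ⟨S, hS, rfl⟩ := Finset.mem_image.mp he
    obtain ⟨T, hT, rfl⟩ := Finset.mem_image.mp hf
    have hST : S ≠ T := fun h => hef (h ▸ rfl)
    obtain ⟨-, hI⟩ := hinc S hS T hT hST
    have h1 : pp S ∈ S := by
      have hm : pp S ∈ ({pp S, Finset.Icc 1 n \ pp S} : Finset (Finset ℕ)) :=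
        Finset.mem_insert_self _ _
      rwa [← (hkey S hS).1] at hm
    have h2 : pp T ∈ T := by
      have hm : pp T ∈ ({pp T, Finset.Icc 1 n \ pp T} : Finset (Finset ℕ)) :=
        Finset.mem_insert_self _ _
      rwa [← (hkey T hT).1] at hm
    have := hI _ h1 _ h2
    rwa [← Finset.nonempty_iff_ne_empty] at this
  suffices hEle : E.card ≤ n - 3 by omega
  rcases star_or_tri E hE2 hEint with ⟨v, hv⟩ | ⟨x, y, z, hxy, hxz, hyz, htri⟩
  · rcases E.eq_empty_or_nonempty with h | ⟨e0, he0⟩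
    · rw [h, Finset.card_empty]
      omega
    have hvX : v ∈ Finset.Icc 1 n := hEX e0 he0 (hv e0 he0)
    have hv1 : 1 ≤ v ∧ v ≤ n := Finset.mem_Icc.mp hvX
    set W := ((Finset.Icc 1 n).erase v).filter (fun w => ¬ cycAdj n v w) with hW
    have hsubE : E ⊆ W.image (fun w => ({v, w} : Finset ℕ)) := by
      intro e he
      rw [Finset.mem_image]
      obtain ⟨w, hwv, hev⟩ := pair_struct (hE2 e he) (hv e he)
      refine ⟨w, ?_, hev.symm⟩
      have hwe : w ∈ e := hev ▸ Finset.mem_insert_of_mem (Finset.mem_singleton_self w)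
      rw [hW, Finset.mem_filter, Finset.mem_erase]
      exact ⟨⟨hwv, hEX e he hwe⟩, hEcyc e he v (hv e he) w hwe (Ne.symm hwv)⟩
    have h5 : E.card ≤ W.card :=
      le_trans (Finset.card_le_card hsubE) Finset.card_image_le
    set n1 := if v = 1 then n else v - 1 with hn1
    set n2 := if v = n then 1 else v + 1 with hn2
    have hadj1 : cycAdj n v n1 := by rw [hn1]; unfold cycAdj; split_ifs <;> omega
    have hadj2 : cycAdj n v n2 := by rw [hn2]; unfold cycAdj; split_ifs <;> omega
    have hn12 : n1 ≠ n2 := by rw [hn1, hn2]; split_ifs <;> omega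
    have hmem1 : n1 ∈ (Finset.Icc 1 n).erase v := by
      rw [hn1, Finset.mem_erase, Finset.mem_Icc]; split_ifs <;> omega
    have hmem2 : n2 ∈ (Finset.Icc 1 n).erase v := by
      rw [hn2, Finset.mem_erase, Finset.mem_Icc]; split_ifs <;> omega
    have hs2 : ({n1, n2} : Finset ℕ) ⊆ (Finset.Icc 1 n).erase v := by
      intro t ht
      rcases Finset.mem_insert.mp ht with rfl | ht
      · exact hmem1
      · exact Finset.mem_singleton.mp ht ▸ hmem2
    have hWsub : W ⊆ ((Finset.Icc 1 n).erase v) \ {n1, n2} := by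
      intro w hw
      rw [hW, Finset.mem_filter] at hw
      rw [Finset.mem_sdiff]
      refine ⟨hw.1, fun hmem => ?_⟩
      rcases Finset.mem_insert.mp hmem with rfl | h'
      · exact hw.2 hadj1
      · exact hw.2 (Finset.mem_singleton.mp h' ▸ hadj2)
    have hc0 : ((Finset.Icc 1 n).erase v).card = n - 1 := by
      rw [Finset.card_erase_of_mem hvX, Nat.card_Icc]
      omega
    have hc2 := Finset.card_sdiff_of_subset hs2
    have hc3 := Finset.card_le_card hWsub
    have hcp : ({n1, n2} : Finset ℕ).card = 2 := Finset.card_pair hn12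
    omega
  · have hsub3 : E ⊆ ({x, y, z} : Finset ℕ).powersetCard 2 := by
      intro e he
      rw [Finset.mem_powersetCard]
      exact ⟨htri e he, hE2 e he⟩
    have hc3 : (({x, y, z} : Finset ℕ).powersetCard 2).card = 3 := by
      rw [Finset.card_powersetCard]
      have : ({x, y, z} : Finset ℕ).card = 3 := by
        rw [Finset.card_insert_of_notMem, Finset.card_insert_of_notMem,
          Finset.card_singleton]
        · simp [hyz]
        · simp [hxy, hxz]
      rw [this]
      decide
    have hle3 : E.card ≤ 3 := hc3 ▸ Finset.card_le_card hsub3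
    rcases Nat.lt_or_ge n 6 with h6 | h6
    swap
    · exact hle3.trans (show (3:ℕ) ≤ n - 3 by omega)
    have hn5 : n = 5 := by omega
    rcases le_or_gt E.card 2 with h | h
    · omega
    exfalso
    have hEeq : E = ({x, y, z} : Finset ℕ).powersetCard 2 :=
      Finset.eq_of_subset_of_card_le hsub3 (by omega)
    have hxyE : ({x, y} : Finset ℕ) ∈ E := by
      rw [hEeq, Finset.mem_powersetCard]
      constructor
      · intro t ht
        simp only [Finset.mem_insert, Finset.mem_singleton] at ht ⊢
        tauto
      · exact Finset.card_pair hxy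
    have hxzE : ({x, z} : Finset ℕ) ∈ E := by
      rw [hEeq, Finset.mem_powersetCard]
      constructor
      · intro t ht
        simp only [Finset.mem_insert, Finset.mem_singleton] at ht ⊢
        tauto
      · exact Finset.card_pair hxz
    have hyzE : ({y, z} : Finset ℕ) ∈ E := by
      rw [hEeq, Finset.mem_powersetCard]
      constructor
      · intro t ht
        simp only [Finset.mem_insert, Finset.mem_singleton] at ht ⊢
        tauto
      · exact Finset.card_pair hyz
    have hxX : x ∈ Finset.Icc 1 n := hEX _ hxyE (Finset.mem_insert_self _ _)
    have hyX : y ∈ Finset.Icc 1 n :=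
      hEX _ hxyE (Finset.mem_insert_of_mem (Finset.mem_singleton_self _))
    have hzX : z ∈ Finset.Icc 1 n :=
      hEX _ hxzE (Finset.mem_insert_of_mem (Finset.mem_singleton_self _))
    have hnc1 : ¬ cycAdj n x y := hEcyc _ hxyE x (Finset.mem_insert_self _ _) y
      (Finset.mem_insert_of_mem (Finset.mem_singleton_self _)) hxy
    have hnc2 : ¬ cycAdj n x z := hEcyc _ hxzE x (Finset.mem_insert_self _ _) z
      (Finset.mem_insert_of_mem (Finset.mem_singleton_self _)) hxz
    have hnc3 : ¬ cycAdj n y z := hEcyc _ hyzE y (Finset.mem_insert_self _ _) z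
      (Finset.mem_insert_of_mem (Finset.mem_singleton_self _)) hyz
    subst hn5
    exact factC hxX hyX hzX hxy hxz hyz hnc1 hnc2 hnc3
end Aux5
section Aux6
open Finset
open scoped Classical

lemma two_mul_choose_two (m : ℕ) : 2 * m.choose 2 = m * (m - 1) := by
  rw [Nat.choose_two_right]
  rcases Nat.eq_zero_or_pos m with h | h
  · simp [h]
  · have hev : Even (m * (m - 1)) := by
      have h1 := Nat.even_mul_succ_self (m - 1)
      have h2 : m - 1 + 1 = m := Nat.succ_pred_eq_of_pos h
      rw [h2] at h1
      rwa [Nat.mul_comm]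
    obtain ⟨k, hk⟩ := hev
    omega

lemma splitB {X A B : Finset ℕ} (hU : A ∪ B = X) (hI : A ∩ B = ∅) : B = X \ A := by
  ext x
  simp only [Finset.mem_sdiff, ← hU, Finset.mem_union]
  constructor
  · intro hx
    refine ⟨Or.inr hx, fun hA => ?_⟩
    have : x ∈ A ∩ B := Finset.mem_inter.mpr ⟨hA, hx⟩
    rw [hI] at this
    exact absurd this (Finset.notMem_empty x)
  · rintro ⟨h1 | h1, h2⟩
    · exact absurd h1 h2
    · exact h1

lemma two_split_edge {n : ℕ} {S : Finset (Finset ℕ)} {Y Y' : Finset ℕ}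
    (hY' : Y' ⊆ Finset.Icc 1 n) (hY'c : Y'.card = 3) (hYc : Y.card = 3)
    (hYs : Y ⊆ Finset.Icc 1 n)
    (h2 : IsRSplit (Finset.Icc 1 n) 2 S) (hphi : phiNe Y Y' S) :
    ∃ P : Finset ℕ, P.card = 2 ∧ S = {P, Finset.Icc 1 n \ P} ∧
      ((P ⊆ Y ∧ ¬ P ⊆ Y') ∨ (P ⊆ Y' ∧ ¬ P ⊆ Y)) := by
  obtain ⟨⟨A, B, rfl, hU, hI, hA, hB⟩, ⟨A1, hA1, hA1c⟩, hmin⟩ := h2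
  have hSP : ({A, B} : Finset (Finset ℕ)) = {A1, Finset.Icc 1 n \ A1} := by
    rcases Finset.mem_insert.mp hA1 with rfl | h
    · rw [splitB hU hI]
    · have hA1B : A1 = B := Finset.mem_singleton.mp h
      subst hA1B
      have hAeq : A = Finset.Icc 1 n \ A1 := by
        apply splitB
        · rw [Finset.union_comm]; exact hU
        · rw [Finset.inter_comm]; exact hI
      rw [Finset.pair_comm, hAeq]
  rw [hSP] at hphi
  refine ⟨A1, hA1c, hSP, ?_⟩
  obtain ⟨t, ht, t', ht', htt', h2t, h2t'⟩ := hphi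
  have hsubY : 2 ≤ (Y ∩ A1).card → A1 ⊆ Y := by
    intro hcard
    have heq : Y ∩ A1 = A1 := Finset.eq_of_subset_of_card_le Finset.inter_subset_right
      (by rw [hA1c]; exact hcard)
    exact heq ▸ Finset.inter_subset_left
  have hsubY' : 2 ≤ (Y' ∩ A1).card → A1 ⊆ Y' := by
    intro hcard
    have heq : Y' ∩ A1 = A1 := Finset.eq_of_subset_of_card_le Finset.inter_subset_right
      (by rw [hA1c]; exact hcard)
    exact heq ▸ Finset.inter_subset_left
  have hnsubY : 2 ≤ (Y ∩ (Finset.Icc 1 n \ A1)).card → ¬ A1 ⊆ Y := by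
    intro hcard hsub
    have h3 := card_inter_sdiff (A := A1) hYs
    have h4 : A1 ⊆ Y ∩ A1 := Finset.subset_inter hsub Finset.Subset.rfl
    have := Finset.card_le_card h4
    omega
  have hnsubY' : 2 ≤ (Y' ∩ (Finset.Icc 1 n \ A1)).card → ¬ A1 ⊆ Y' := by
    intro hcard hsub
    have h3 := card_inter_sdiff (A := A1) hY'
    have h4 : A1 ⊆ Y' ∩ A1 := Finset.subset_inter hsub Finset.Subset.rfl
    have := Finset.card_le_card h4
    omega
  rcases Finset.mem_insert.mp ht with rfl | ht2 <;> rcases Finset.mem_insert.mp ht' with h' | h'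
  · exact absurd h'.symm htt'
  · exact Or.inl ⟨hsubY h2t, hnsubY' (Finset.mem_singleton.mp h' ▸ h2t')⟩
  · have ht2' : t = Finset.Icc 1 n \ A1 := Finset.mem_singleton.mp ht2
    subst h'
    exact Or.inr ⟨hsubY' h2t', hnsubY (ht2' ▸ h2t)⟩
  · exact absurd ((Finset.mem_singleton.mp ht2).trans (Finset.mem_singleton.mp h').symm) htt'

lemma lower_bound {n : ℕ} (hn : 5 ≤ n) (𝒮 : Finset (Finset (Finset ℕ)))
    (hinj : IsInjective (Finset.Icc 1 n) 𝒮)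
    (h12 : ∀ S ∈ 𝒮, IsRSplit (Finset.Icc 1 n) 1 S ∨ IsRSplit (Finset.Icc 1 n) 2 S) :
    n / 2 ≤ dimSS 𝒮 := by
  by_contra hcon
  push_neg at hcon
  set X := Finset.Icc 1 n with hX
  set d := dimSS 𝒮 with hd
  have hXcard : X.card = n := by rw [hX, Nat.card_Icc]; omega
  -- Step 1: every "degree" is at most d
  have hdeg : ∀ c ∈ X, ((X.erase c).filter fun y => ps X c y ∈ 𝒮).card ≤ d := by
    intro c hc
    set N := (X.erase c).filter fun y => ps X c y ∈ 𝒮 with hN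
    have hNprop : ∀ y ∈ N, (y ≠ c ∧ y ∈ X) ∧ ps X c y ∈ 𝒮 := by
      intro y hy
      rw [hN, Finset.mem_filter, Finset.mem_erase] at hy
      exact hy
    have hps_inj : ∀ y ∈ N, ∀ z ∈ N, ps X c y = ps X c z → y = z := by
      intro y hy z hz hyz
      have hmem : ({c, y} : Finset ℕ) ∈ ps X c z := hyz ▸ Finset.mem_insert_self _ _
      rcases Finset.mem_insert.mp hmem with h | h
      · have : y ∈ ({c, z} : Finset ℕ) := h ▸ (Finset.mem_insert_of_mem (Finset.mem_singleton_self y))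
        rcases Finset.mem_insert.mp this with h' | h'
        · exact absurd h' (hNprop y hy).1.1
        · exact Finset.mem_singleton.mp h'
      · exfalso
        have h1 : c ∈ ({c, y} : Finset ℕ) := Finset.mem_insert_self _ _
        rw [Finset.mem_singleton.mp h, Finset.mem_sdiff] at h1
        exact h1.2 (Finset.mem_insert_self _ _)
    set 𝒯 := N.image (fun y => ps X c y) with h𝒯
    have hcard𝒯 : 𝒯.card = N.card := Finset.card_image_of_injOn
      (fun y hy z hz h => hps_inj y (Finset.mem_coe.mp hy) z (Finset.mem_coe.mp hz) h)
    have h𝒯mem : 𝒯 ∈ 𝒮.powerset.filter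
        (fun 𝒰 => ∀ S ∈ 𝒰, ∀ T ∈ 𝒰, S ≠ T → Incompatible S T) := by
      rw [Finset.mem_filter, Finset.mem_powerset]
      constructor
      · intro S hS
        obtain ⟨y, hy, rfl⟩ := Finset.mem_image.mp hS
        exact (hNprop y hy).2
      · intro S hS T hT hST
        obtain ⟨y, hy, rfl⟩ := Finset.mem_image.mp hS
        obtain ⟨z, hz, rfl⟩ := Finset.mem_image.mp hT
        have hyz : y ≠ z := fun h => hST (h ▸ rfl)
        obtain ⟨⟨hyc, hyX⟩, -⟩ := hNprop y hy
        obtain ⟨⟨hzc, hzX⟩, -⟩ := hNprop z hz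
        refine ⟨hST, ?_⟩
        have hwit : (X \ ({c, y, z} : Finset ℕ)).Nonempty := by
          apply sdiff_nonempty_of_card hXcard
          have h1 : ({c, y, z} : Finset ℕ).card ≤ 3 := by
            calc ({c, y, z} : Finset ℕ).card ≤ ({y, z} : Finset ℕ).card + 1 :=
              Finset.card_insert_le _ _
            _ ≤ (({z} : Finset ℕ).card + 1) + 1 :=
              Nat.add_le_add_right (Finset.card_insert_le _ _) 1
            _ = 3 := by rw [Finset.card_singleton]
          omega
        obtain ⟨w, hw⟩ := hwit
        rw [Finset.mem_sdiff] at hw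
        have hwX := hw.1
        have hwc : w ≠ c := fun h => hw.2 (h ▸ Finset.mem_insert_self _ _)
        have hwy : w ≠ y := fun h => hw.2 (by
          rw [h]; exact Finset.mem_insert_of_mem (Finset.mem_insert_self _ _))
        have hwz : w ≠ z := fun h => hw.2 (by
          rw [h]
          exact Finset.mem_insert_of_mem (Finset.mem_insert_of_mem (Finset.mem_singleton_self _)))
        intro A hA B hB
        rw [← Finset.nonempty_iff_ne_empty]
        unfold ps at hA hB
        rcases Finset.mem_insert.mp hA with rfl | hA2 <;>
          rcases Finset.mem_insert.mp hB with rfl | hB2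
        · exact ⟨c, Finset.mem_inter.mpr ⟨Finset.mem_insert_self _ _, Finset.mem_insert_self _ _⟩⟩
        · rw [Finset.mem_singleton.mp hB2]
          refine ⟨y, Finset.mem_inter.mpr ⟨Finset.mem_insert_of_mem (Finset.mem_singleton_self _), ?_⟩⟩
          rw [Finset.mem_sdiff]
          refine ⟨hyX, fun hmem => ?_⟩
          rcases Finset.mem_insert.mp hmem with h | h
          · exact hyc h
          · exact hyz (Finset.mem_singleton.mp h)
        · rw [Finset.mem_singleton.mp hA2]
          refine ⟨z, Finset.mem_inter.mpr ⟨?_, Finset.mem_insert_of_mem (Finset.mem_singleton_self _)⟩⟩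
          rw [Finset.mem_sdiff]
          refine ⟨hzX, fun hmem => ?_⟩
          rcases Finset.mem_insert.mp hmem with h | h
          · exact hzc h
          · exact hyz (Finset.mem_singleton.mp h).symm
        · rw [Finset.mem_singleton.mp hA2, Finset.mem_singleton.mp hB2]
          refine ⟨w, Finset.mem_inter.mpr ⟨?_, ?_⟩⟩ <;> rw [Finset.mem_sdiff] <;>
            refine ⟨hwX, fun hmem => ?_⟩
          · rcases Finset.mem_insert.mp hmem with h | h
            · exact hwc h
            · exact hwy (Finset.mem_singleton.mp h)
          · rcases Finset.mem_insert.mp hmem with h | h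
            · exact hwc h
            · exact hwz (Finset.mem_singleton.mp h)
    have hsup : 𝒯.card ≤ dimSS 𝒮 := by
      unfold dimSS
      exact Finset.le_sup h𝒯mem
    rw [hd]
    omega
  -- Step 2: at most one common non-neighbour per pair
  have hbad : ∀ p ∈ X.powersetCard 2,
      ((X \ p).filter fun c => ∀ a ∈ p, ps X c a ∉ 𝒮).card ≤ 1 := by
    intro p hp
    rw [Finset.mem_powersetCard] at hp
    obtain ⟨hpX, hp2⟩ := hp
    by_contra hgt
    push_neg at hgt
    obtain ⟨c, hc, d', hd', hcd⟩ := Finset.one_lt_card.mp hgt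
    rw [Finset.mem_filter, Finset.mem_sdiff] at hc hd'
    have hYc : (insert c p).card = 3 := by rw [Finset.card_insert_of_notMem hc.1.2, hp2]
    have hY'c : (insert d' p).card = 3 := by rw [Finset.card_insert_of_notMem hd'.1.2, hp2]
    have hYX : insert c p ⊆ X := Finset.insert_subset hc.1.1 hpX
    have hY'X : insert d' p ⊆ X := Finset.insert_subset hd'.1.1 hpX
    have hYY' : insert c p ≠ insert d' p := by
      intro h
      have : c ∈ insert d' p := h ▸ Finset.mem_insert_self c p
      rcases Finset.mem_insert.mp this with h' | h'
      · exact hcd h'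
      · exact hc.1.2 h'
    obtain ⟨S, hS𝒮, hphi⟩ := hinj _ _ hYX hY'X hYc hY'c hYY'
    rcases h12 S hS𝒮 with h1 | h1
    · -- 1-splits cannot distinguish
      obtain ⟨⟨A, B, rfl, hU, hI, hA, hB⟩, ⟨A1, hA1, hA1c⟩, hmin⟩ := h1
      obtain ⟨t, ht, t', ht', htt', h2t, h2t'⟩ := hphi
      have hAB : ∀ u ∈ ({A, B} : Finset (Finset ℕ)), u = A ∨ u = B := by
        intro u hu
        rcases Finset.mem_insert.mp hu with h | h
        · exact Or.inl h
        · exact Or.inr (Finset.mem_singleton.mp h)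
      have hle1 : ∀ Z : Finset ℕ, (Z ∩ A1).card ≤ 1 := by
        intro Z
        have := Finset.card_le_card (show Z ∩ A1 ⊆ A1 from Finset.inter_subset_right)
        omega
      have hA1tt : A1 = t ∨ A1 = t' := by
        rcases hAB t ht with rfl | rfl <;> rcases hAB t' ht' with rfl | rfl <;>
          rcases hAB A1 hA1 with rfl | rfl <;> tauto
      rcases hA1tt with rfl | rfl
      · have := hle1 (insert c p); omega
      · have := hle1 (insert d' p); omega
    · obtain ⟨P, hP2c, hSP, hcase⟩ := two_split_edge hY'X hY'c hYc hYX h1 hphi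
      rcases hcase with ⟨hin, hout⟩ | ⟨hin, hout⟩
      · -- P ⊆ insert c p, P ⊄ insert d' p : P = {c, e} with e ∈ p
        obtain ⟨x, hxP, hxY'⟩ := Finset.not_subset.mp hout
        have hxY : x ∈ insert c p := hin hxP
        have hxc : x = c := by
          rcases Finset.mem_insert.mp hxY with h | h
          · exact h
          · exact absurd (Finset.mem_insert_of_mem h) hxY'
        subst hxc
        obtain ⟨e, hec, hPE⟩ := pair_struct hP2c hxP
        have heY : e ∈ insert x p := hin (hPE ▸ Finset.mem_insert_of_mem (Finset.mem_singleton_self e))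
        have hep : e ∈ p := by
          rcases Finset.mem_insert.mp heY with h | h
          · exact absurd h hec
          · exact h
        apply hc.2 e hep
        rw [hSP, hPE] at hS𝒮
        exact hS𝒮
      · obtain ⟨x, hxP, hxY⟩ := Finset.not_subset.mp hout
        have hxY' : x ∈ insert d' p := hin hxP
        have hxd : x = d' := by
          rcases Finset.mem_insert.mp hxY' with h | h
          · exact h
          · exact absurd (Finset.mem_insert_of_mem h) hxY
        subst hxd
        obtain ⟨e, hec, hPE⟩ := pair_struct hP2c hxP
        have heY' : e ∈ insert x p := hin (hPE ▸ Finset.mem_insert_of_mem (Finset.mem_singleton_self e))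
        have hep : e ∈ p := by
          rcases Finset.mem_insert.mp heY' with h | h
          · exact absurd h hec
          · exact h
        apply hd'.2 e hep
        rw [hSP, hPE] at hS𝒮
        exact hS𝒮
  -- Step 3: double counting
  set M : ℕ → Finset ℕ := fun c => (X.erase c).filter (fun y => ¬ (ps X c y ∈ 𝒮)) with hM
  have hMcard : ∀ c ∈ X, n - 1 - d ≤ (M c).card := by
    intro c hc
    have hsplitcard := Finset.card_filter_add_card_filter_not
      (s := X.erase c) (p := fun y => ps X c y ∈ 𝒮)
    have herase : (X.erase c).card = n - 1 := by
      rw [Finset.card_erase_of_mem hc, hXcard]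
    have hdc := hdeg c hc
    have hMeq : M c = (X.erase c).filter (fun y => ¬ (ps X c y ∈ 𝒮)) := by rw [hM]
    rw [hMeq]
    omega
  set P2 := X.powersetCard 2 with hP2
  have hswap : ∑ c ∈ X, ((P2.filter fun p => p ⊆ M c)).card
      = ∑ p ∈ P2, ((X.filter fun c => p ⊆ M c)).card := by
    simp only [Finset.card_filter]
    rw [Finset.sum_comm]
  have hlow : ∀ c ∈ X, (n - 1 - d).choose 2 ≤ ((P2.filter fun p => p ⊆ M c)).card := by
    intro c hc
    have hMX : M c ⊆ X := (Finset.filter_subset _ _).trans (Finset.erase_subset _ _)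
    have hsub : (M c).powersetCard 2 ⊆ P2.filter fun p => p ⊆ M c := by
      intro p hp
      rw [Finset.mem_powersetCard] at hp
      rw [Finset.mem_filter, hP2, Finset.mem_powersetCard]
      exact ⟨⟨hp.1.trans hMX, hp.2⟩, hp.1⟩
    calc (n - 1 - d).choose 2 ≤ (M c).card.choose 2 :=
      Nat.choose_le_choose 2 (hMcard c hc)
    _ = ((M c).powersetCard 2).card := (Finset.card_powersetCard 2 (M c)).symm
    _ ≤ _ := Finset.card_le_card hsub
  have hup : ∀ p ∈ P2, ((X.filter fun c => p ⊆ M c)).card ≤ 1 := by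
    intro p hp
    refine le_trans (Finset.card_le_card ?_) (hbad p (hP2 ▸ hp))
    intro c hcmem
    rw [Finset.mem_filter] at hcmem
    rw [Finset.mem_filter, Finset.mem_sdiff]
    have hcp : c ∉ p := by
      intro h
      have := hcmem.2 h
      rw [hM, Finset.mem_filter, Finset.mem_erase] at this
      exact this.1.1 rfl
    refine ⟨⟨hcmem.1, hcp⟩, fun a ha => ?_⟩
    have := hcmem.2 ha
    rw [hM, Finset.mem_filter] at this
    exact this.2
  have hA : n * ((n - 1 - d).choose 2) ≤ ∑ c ∈ X, ((P2.filter fun p => p ⊆ M c)).card := by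
    calc n * ((n - 1 - d).choose 2) = ∑ _c ∈ X, (n - 1 - d).choose 2 := by
          rw [Finset.sum_const, hXcard, smul_eq_mul]
    _ ≤ _ := Finset.sum_le_sum hlow
  have hB : ∑ p ∈ P2, ((X.filter fun c => p ⊆ M c)).card ≤ P2.card := by
    calc ∑ p ∈ P2, ((X.filter fun c => p ⊆ M c)).card ≤ ∑ _p ∈ P2, 1 :=
      Finset.sum_le_sum hup
    _ = P2.card := by rw [Finset.sum_const, smul_eq_mul, mul_one]
  have hP2card : P2.card = n.choose 2 := by
    rw [hP2, Finset.card_powersetCard, hXcard]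
  set m := n - 1 - d with hm
  have hm2 : n ≤ 2 * m := by omega
  have hm3 : 3 ≤ m := by omega
  have harith : n.choose 2 < n * m.choose 2 := by
    have h1 := two_mul_choose_two m
    have h2 := two_mul_choose_two n
    have h3 : n ≤ m * (m - 1) := by
      calc n ≤ 2 * m := hm2
      _ ≤ (m - 1) * m := Nat.mul_le_mul_right m (by omega)
      _ = m * (m - 1) := Nat.mul_comm _ _
    have h4 : n * (n - 1) < n * (m * (m - 1)) :=
      mul_lt_mul_of_pos_left (by omega) (by omega)
    have h5 : n * (m * (m - 1)) = 2 * (n * m.choose 2) := by rw [← h1]; ring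
    have h6 : 2 * n.choose 2 < 2 * (n * m.choose 2) := by rw [h2, ← h5]; exact h4
    omega
  have hfinal : n * m.choose 2 ≤ n.choose 2 := by
    calc n * m.choose 2 ≤ ∑ c ∈ X, ((P2.filter fun p => p ⊆ M c)).card := hA
    _ = ∑ p ∈ P2, ((X.filter fun c => p ⊆ M c)).card := hswap
    _ ≤ P2.card := hB
    _ = n.choose 2 := hP2card
  omega

end Aux6

/-- For all integers `n ≥ 5`, `⌊n/2⌋ ≤ ID₂(n) ≤ n − 3`. -/
theorem statement18 (n : ℕ) (hn : 5 ≤ n) : n / 2 ≤ ID2 n ∧ ID2 n ≤ n - 3 := by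
  have hmem : dimSS (SS n) ∈ {d : ℕ | ∃ 𝒮 : Finset (Finset (Finset ℕ)),
      IsSplitSystem (Finset.Icc 1 n) 𝒮 ∧ IsInjective (Finset.Icc 1 n) 𝒮 ∧
      (∀ S ∈ 𝒮, IsRSplit (Finset.Icc 1 n) 1 S ∨ IsRSplit (Finset.Icc 1 n) 2 S) ∧
      dimSS 𝒮 = d} :=
    ⟨SS n, SS_isSplitSystem hn, SS_injective hn, SS_rsplit hn, rfl⟩
  constructor
  · have h1 := Nat.sInf_mem (⟨_, hmem⟩ : Set.Nonempty _)
    obtain ⟨𝒮, hss, hinj, h12, hdim⟩ := h1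
    unfold ID2
    rw [← hdim]
    exact lower_bound hn 𝒮 hinj h12
  · exact le_trans (Nat.sInf_le hmem) (SS_dim_le hn)

end InjectiveSplitSystems
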